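/- Tightness of the shallow-light tradeoff: For every ε > 0 and every α with 1 ≤ α < 1 + 1/ε, there exist a finite connected simple undirected graph G = (V,E) with positive edge weights c : E → ℝ_{>0} and a vertex r ∈ V such that dist_{(G,c)}(r,v) ≤ 1 for every v ∈ V, and every spanning tree F of G in which the unique path in F from r to each vertex has total weight at most 1 + ε satisfies: the total weight of F is strictly greater than α · MST(G,c). -/

import Mathlib

/-- The total weight of a walk: the sum of the weights of its edges. -/
noncomputable def walkWeight {V : Type*} {G : SimpleGraph V} (c : Sym2 V → ℝ)
    {u v : V} (p : G.Walk u v) : ℝ :=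
  (p.edges.map c).sum

/-- The weighted distance in `(G,c)`: the infimum of the total weights of
`u`–`v` walks. -/
noncomputable def wdist {V : Type*} (G : SimpleGraph V) (c : Sym2 V → ℝ)
    (u v : V) : ℝ :=
  sInf {x : ℝ | ∃ p : G.Walk u v, x = walkWeight c p}

/-- The total weight of (the edges of) a graph. -/
noncomputable def totalWeight {V : Type*} (F : SimpleGraph V) (c : Sym2 V → ℝ) : ℝ :=
  ∑ᶠ e ∈ F.edgeSet, c e

/-- `MST(G,c)`: the minimum total weight of a spanning tree of `G`. -/
noncomputable def mstWeight {V : Type*} (G : SimpleGraph V) (c : Sym2 V → ℝ) : ℝ :=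
  sInf {x : ℝ | ∃ T : SimpleGraph V, T ≤ G ∧ T.IsTree ∧ x = totalWeight T c}

open SimpleGraph

/-- A graph built from a "parent map" with decreasing rank is a tree. -/
lemma tree_of_parent {V : Type*} [Fintype V] [DecidableEq V] (r : V) (parent : V → V)
    (rank : V → ℕ) (hr : ∀ v, v ≠ r → rank (parent v) < rank v) :
    (SimpleGraph.fromEdgeSet ((fun v => s(v, parent v)) '' {v | v ≠ r})).IsTree := by
  set T := SimpleGraph.fromEdgeSet ((fun v => s(v, parent v)) '' {v | v ≠ r}) with hT
  have hne : ∀ v, v ≠ r → parent v ≠ v := by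
    intro v hv h
    have := hr v hv
    rw [h] at this
    omega
  have adj_parent : ∀ v, v ≠ r → T.Adj v (parent v) := by
    intro v hv
    rw [hT, fromEdgeSet_adj]
    exact ⟨⟨v, hv, rfl⟩, (hne v hv).symm⟩
  -- adjacency classification
  have adj_class : ∀ x z, T.Adj x z → (x ≠ r ∧ parent x = z) ∨ (z ≠ r ∧ parent z = x) := by
    intro x z h
    rw [hT, fromEdgeSet_adj] at h
    obtain ⟨⟨w, hw, hwe⟩, _⟩ := h
    simp only [Sym2.eq, Sym2.rel_iff', Prod.mk.injEq, Prod.swap_prod_mk] at hwe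
    rcases hwe with ⟨rfl, rfl⟩ | ⟨rfl, rfl⟩
    · exact Or.inl ⟨hw, rfl⟩
    · exact Or.inr ⟨hw, rfl⟩
  have hreach' : ∀ n v, rank v ≤ n → T.Reachable v r := by
    intro n
    induction n with
    | zero =>
      intro v hv
      by_cases h : v = r
      · rw [h]
      · exact absurd (hr v h) (by omega)
    | succ n ih =>
      intro v hv
      by_cases h : v = r
      · rw [h]
      · exact ((adj_parent v h).reachable).trans (ih (parent v) (by have := hr v h; omega))
  have hreach : ∀ v, T.Reachable v r := fun v => hreach' (rank v) v le_rfl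
  constructor
  · haveI : Nonempty V := ⟨r⟩
    exact Connected.mk (fun u v => (hreach u).trans (hreach v).symm)
  · intro v0 c hc
    have hsupnn : c.support.toFinset.Nonempty := by
      refine ⟨v0, ?_⟩
      simp [Walk.start_mem_support]
    obtain ⟨vm, hvm, hmax⟩ := Finset.exists_max_image c.support.toFinset rank hsupnn
    rw [List.mem_toFinset] at hvm
    have hmax' : ∀ x ∈ c.support, rank x ≤ rank vm := by
      intro x hx
      exact hmax x (List.mem_toFinset.2 hx)
    set c' := c.rotate vm hvm with hc'def
    have hc' : c'.IsCycle := hc.rotate hvm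
    have hsup' : ∀ x ∈ c'.support, rank x ≤ rank vm := by
      intro x hx
      rw [c'.support_eq_cons] at hx
      rcases List.mem_cons.1 hx with rfl | hx
      · exact le_refl _
      · have := (Walk.support_rotate c vm hvm).mem_iff.1 hx
        exact hmax' x (by rw [c.support_eq_cons]; exact List.mem_cons_of_mem _ this)
    -- destructure the cycle
    cases hcc : c' with
    | nil =>
      rw [hcc] at hc'
      exact hc'.ne_nil rfl
    | @cons _ x _ h q =>
      rw [hcc] at hc'
      rw [Walk.cons_isCycle_iff] at hc'
      obtain ⟨hq, hnotin⟩ := hc'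
      have hxv : vm ≠ x := h.ne
      obtain ⟨y, h2, q2, heq⟩ := Walk.exists_eq_cons_of_ne hxv q.reverse
      have hyx : s(vm, y) ∈ q.edges := by
        have : s(vm, y) ∈ q.reverse.edges := by
          rw [heq, Walk.edges_cons]; exact List.mem_cons_self
        rwa [Walk.edges_reverse, List.mem_reverse] at this
      have hxs : x ∈ c'.support := by
        rw [hcc, Walk.support_cons]
        exact List.mem_cons_of_mem _ q.start_mem_support
      have hys : y ∈ c'.support := by
        rw [hcc, Walk.support_cons]
        refine List.mem_cons_of_mem _ ?_
        have : y ∈ q.reverse.support := by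
          rw [heq, Walk.support_cons]
          exact List.mem_cons_of_mem _ q2.start_mem_support
        rwa [Walk.support_reverse, List.mem_reverse] at this
      have hpx : parent vm = x := by
        rcases adj_class vm x h with ⟨_, hp⟩ | ⟨hz, hp⟩
        · exact hp
        · exact absurd (hsup' x hxs) (by have := hr x hz; rw [hp] at this; omega)
      have hpy : parent vm = y := by
        rcases adj_class vm y h2 with ⟨_, hp⟩ | ⟨hz, hp⟩
        · exact hp
        · exact absurd (hsup' y hys) (by have := hr y hz; rw [hp] at this; omega)
      have hxy : x = y := hpx.symm.trans hpy
      subst hxy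
      exact hnotin hyx

open SimpleGraph

namespace SLT

/-- Vertex type: root `none`, hub, and tooth vertices `(t, i)`. -/
abbrev Vx (m K : ℕ) : Type := Option ((Fin m × Fin (K + 2)) ⊕ Unit)

variable {m K : ℕ}

def hub : Vx m K := some (Sum.inr ())

def tu (t : Fin m) (i : Fin (K + 2)) : Vx m K := some (Sum.inl (t, i))

/-- base adjacency among non-root vertices -/
def bb : ((Fin m × Fin (K + 2)) ⊕ Unit) → ((Fin m × Fin (K + 2)) ⊕ Unit) → Prop
  | Sum.inl p, Sum.inl q => p.1 = q.1 ∧ ((p.2 : ℕ) + 1 = q.2 ∨ (q.2 : ℕ) + 1 = p.2)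
  | Sum.inl p, Sum.inr _ => (p.2 : ℕ) = 0
  | Sum.inr _, Sum.inl q => (q.2 : ℕ) = 0
  | Sum.inr _, Sum.inr _ => False

lemma bb_symm : ∀ {x y : (Fin m × Fin (K + 2)) ⊕ Unit}, bb x y → bb y x := by
  rintro (⟨t, i⟩ | ⟨⟩) (⟨t', i'⟩ | ⟨⟩) h <;> simp [bb] at h ⊢ <;> tauto

def GG (m K : ℕ) : SimpleGraph (Vx m K) where
  Adj x y := x ≠ y ∧ (x = none ∨ y = none ∨ ∃ a b, x = some a ∧ y = some b ∧ bb a b)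
  symm := by
    constructor
    rintro x y ⟨hxy, h⟩
    refine ⟨hxy.symm, ?_⟩
    rcases h with h | h | ⟨a, b, ha, hb, hab⟩
    · exact Or.inr (Or.inl h)
    · exact Or.inl h
    · exact Or.inr (Or.inr ⟨b, a, hb, ha, bb_symm hab⟩)
  loopless := ⟨fun x h => h.1 rfl⟩

lemma GG_adj_root (v : Vx m K) (hv : v ≠ none) : (GG m K).Adj none v :=
  (show _ ∧ _ from ⟨fun h => hv h.symm, Or.inl rfl⟩)

lemma GG_connected (m K : ℕ) : (GG m K).Connected := by
  haveI : Nonempty (Vx m K) := ⟨none⟩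
  refine Connected.mk (fun u v => ?_)
  have h : ∀ w : Vx m K, (GG m K).Reachable none w := by
    intro w
    by_cases hw : w = none
    · rw [hw]
    · exact (GG_adj_root w hw).reachable
  exact (h u).symm.trans (h v)

/-- the weight function: spokes (edges at the root) have weight 1, others δ. -/
def cw (m K : ℕ) (δ : ℝ) : Sym2 (Vx m K) → ℝ := fun e => if none ∈ e then 1 else δ

lemma cw_pos {δ : ℝ} (hδ : 0 < δ) (e : Sym2 (Vx m K)) : 0 < cw m K δ e := by
  unfold cw; split <;> [exact one_pos; exact hδ]

lemma cw_nonneg {δ : ℝ} (hδ : 0 < δ) (e : Sym2 (Vx m K)) : 0 ≤ cw m K δ e :=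
  (cw_pos hδ e).le

lemma cw_ge {δ : ℝ} (hδ1 : δ ≤ 1) (e : Sym2 (Vx m K)) : δ ≤ cw m K δ e := by
  unfold cw; split <;> [exact hδ1; exact le_rfl]

lemma cw_root {δ : ℝ} (v : Vx m K) : cw m K δ s(none, v) = 1 := by
  unfold cw
  rw [if_pos (Sym2.mem_iff.2 (Or.inl rfl))]

lemma cw_nonroot {δ : ℝ} (x y : (Fin m × Fin (K + 2)) ⊕ Unit) :
    cw m K δ s(some x, some y) = δ := by
  unfold cw
  rw [if_neg]
  rw [Sym2.mem_iff]
  rintro (h | h) <;> cases h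

end SLT
namespace SLT

variable {m K : ℕ}

def parent0 : Vx m K → Vx m K
  | none => none
  | some (Sum.inr _) => none
  | some (Sum.inl (t, i)) =>
      if h : (i : ℕ) = 0 then hub else tu t ⟨(i : ℕ) - 1, by omega⟩

def rank0 : Vx m K → ℕ
  | none => 0
  | some (Sum.inr _) => 1
  | some (Sum.inl (_, i)) => (i : ℕ) + 2

lemma rank0_parent0 (v : Vx m K) (hv : v ≠ none) : rank0 (parent0 v) < rank0 v := by
  match v with
  | none => exact absurd rfl hv
  | some (Sum.inr ()) => simp [parent0, rank0]
  | some (Sum.inl (t, i)) =>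
    by_cases h : (i : ℕ) = 0
    · simp [parent0, rank0, h, hub]
    · simp only [parent0, dif_neg h, rank0, tu]
      omega

def T0 (m K : ℕ) : SimpleGraph (Vx m K) :=
  SimpleGraph.fromEdgeSet ((fun v => s(v, parent0 v)) '' {v : Vx m K | v ≠ none})

lemma T0_isTree (m K : ℕ) : (T0 m K).IsTree :=
  tree_of_parent none parent0 rank0 rank0_parent0

lemma adj_parent0 (v : Vx m K) (hv : v ≠ none) : (GG m K).Adj v (parent0 v) := by
  match v with
  | none => exact absurd rfl hv
  | some (Sum.inr ()) =>
    exact ((GG m K).adj_symm (GG_adj_root _ (by simp [parent0])))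
  | some (Sum.inl (t, i)) =>
    by_cases h : (i : ℕ) = 0
    · simp only [parent0, dif_pos h]
      refine (show _ ∧ _ from ⟨by simp [hub], Or.inr (Or.inr ⟨_, _, rfl, rfl, ?_⟩)⟩)
      exact h
    · simp only [parent0, dif_neg h]
      refine (show _ ∧ _ from ⟨?_, Or.inr (Or.inr ⟨_, _, rfl, rfl, ?_⟩)⟩)
      · simp only [tu, ne_eq, Option.some.injEq, Sum.inl.injEq, Prod.mk.injEq]
        rintro ⟨-, h2⟩
        have := congrArg Fin.val h2
        simp at this
        omega
      · exact ⟨rfl, Or.inr (by simp; omega)⟩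

lemma T0_le (m K : ℕ) : T0 m K ≤ GG m K := by
  intro x y hxy
  rw [T0, fromEdgeSet_adj] at hxy
  obtain ⟨⟨v, hv, hve⟩, hne⟩ := hxy
  simp only [Sym2.eq, Sym2.rel_iff', Prod.mk.injEq, Prod.swap_prod_mk] at hve
  rcases hve with ⟨rfl, rfl⟩ | ⟨rfl, rfl⟩
  · exact adj_parent0 _ hv
  · exact ((GG m K).adj_symm (adj_parent0 _ hv))

end SLT
namespace SLT

variable {m K : ℕ}

lemma walkWeight_nonneg {V : Type*} {G : SimpleGraph V} (c : Sym2 V → ℝ)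
    (hc : ∀ e, 0 ≤ c e) {u v : V} (p : G.Walk u v) : 0 ≤ walkWeight c p := by
  refine List.sum_nonneg ?_
  intro x hx
  obtain ⟨e, -, rfl⟩ := List.mem_map.1 hx
  exact hc e

lemma walkWeight_cons {V : Type*} {G : SimpleGraph V} (c : Sym2 V → ℝ)
    {u v w : V} (h : G.Adj u v) (p : G.Walk v w) :
    walkWeight c (SimpleGraph.Walk.cons h p) = c s(u, v) + walkWeight c p := by
  simp [walkWeight]

lemma walkWeight_reverse {V : Type*} {G : SimpleGraph V} (c : Sym2 V → ℝ)
    {u v : V} (p : G.Walk u v) : walkWeight c p.reverse = walkWeight c p := by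
  unfold walkWeight
  rw [SimpleGraph.Walk.edges_reverse, List.map_reverse, List.sum_reverse]

lemma totalWeight_T0 (m K : ℕ) (δ : ℝ) :
    totalWeight (T0 m K) (cw m K δ) = 1 + (m * (K + 2) : ℕ) * δ := by
  classical
  have hedge : (T0 m K).edgeSet = (fun v => s(v, parent0 v)) '' {v : Vx m K | v ≠ none} := by
    rw [T0, SimpleGraph.edgeSet_fromEdgeSet]
    refine Disjoint.sdiff_eq_left (Set.disjoint_left.2 ?_)
    rintro e ⟨v, hv, rfl⟩ he
    simp only [Set.mem_setOf_eq, Sym2.mem_diagSet, Sym2.isDiag_iff_proj_eq] at he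
    exact absurd (rank0_parent0 v hv) (by rw [← he]; omega)
  have hset : ((fun v => s(v, parent0 v)) '' {v : Vx m K | v ≠ none}) =
      ↑((Finset.univ.erase none).image (fun v : Vx m K => s(v, parent0 v))) := by
    rw [Finset.coe_image]
    ext e
    simp
  have hinj : ∀ x ∈ Finset.univ.erase (none : Vx m K), ∀ y ∈ Finset.univ.erase none,
      s(x, parent0 x) = s(y, parent0 y) → x = y := by
    intro x hx y hy h
    rw [Finset.mem_erase] at hx hy
    simp only [Sym2.eq, Sym2.rel_iff', Prod.mk.injEq, Prod.swap_prod_mk] at h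
    rcases h with ⟨h1, -⟩ | ⟨h1, h2⟩
    · exact h1
    · have l1 := rank0_parent0 x hx.1
      have l2 := rank0_parent0 y hy.1
      rw [h2] at l1; rw [← h1] at l2; omega
  rw [totalWeight, hedge, hset, finsum_mem_coe_finset, Finset.sum_image hinj]
  have hpt : ∀ v ∈ Finset.univ.erase (none : Vx m K),
      cw m K δ s(v, parent0 v) = if v = hub then 1 else δ := by
    rintro v hv
    rw [Finset.mem_erase] at hv
    match v with
    | none => exact absurd rfl hv.1
    | some (Sum.inr ()) =>
      rw [if_pos (show (some (Sum.inr ()) : Vx m K) = hub from rfl)]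
      show cw m K δ s(some (Sum.inr ()), none) = 1
      rw [Sym2.eq_swap, cw_root]
    | some (Sum.inl (t, i)) =>
      rw [if_neg (by simp [hub])]
      by_cases h : (i : ℕ) = 0
      · simp only [parent0, dif_pos h]
        exact cw_nonroot _ _
      · simp only [parent0, dif_neg h]
        exact cw_nonroot _ _
  rw [Finset.sum_congr rfl hpt]
  have hhub : (hub : Vx m K) ∈ Finset.univ.erase (none : Vx m K) := by
    rw [Finset.mem_erase]; exact ⟨by simp [hub], Finset.mem_univ _⟩
  rw [← Finset.add_sum_erase _ _ hhub, if_pos rfl]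
  have : ∀ v ∈ ((Finset.univ.erase (none : Vx m K)).erase hub),
      (if v = hub then (1:ℝ) else δ) = δ := by
    intro v hv
    rw [Finset.mem_erase] at hv
    rw [if_neg hv.1]
  rw [Finset.sum_congr rfl this, Finset.sum_const]
  have hcard : ((Finset.univ.erase (none : Vx m K)).erase hub).card = m * (K + 2) := by
    rw [Finset.card_erase_of_mem hhub, Finset.card_erase_of_mem (Finset.mem_univ _)]
    simp [Vx]
  rw [hcard, nsmul_eq_mul]


lemma tw_eq {V : Type*} (F : SimpleGraph V) (c : Sym2 V → ℝ) (h : F.edgeSet.Finite) :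
    totalWeight F c = ∑ e ∈ h.toFinset, c e := by
  have h2 := finsum_mem_coe_finset c h.toFinset
  rw [Set.Finite.coe_toFinset] at h2
  rw [totalWeight, ← h2]

end SLT


open SimpleGraph in
set_option maxHeartbeats 1000000 in
/-- **Tightness of the shallow-light tradeoff.** For every `ε > 0` and every
`α` with `1 ≤ α < 1 + 1/ε`, there exist a finite connected simple undirected
graph `G = (V,E)` with positive edge weights `c` and a vertex `r ∈ V` such that
`dist_{(G,c)}(r,v) ≤ 1` for every `v ∈ V`, and every spanning tree `F` of `G`
in which the unique path in `F` from `r` to each vertex has total weight at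
most `1 + ε` has total weight strictly greater than `α · MST(G,c)`. -/
theorem shallow_light_tight (ε : ℝ) (hε : 0 < ε)
    (a : ℝ) (ha1 : 1 ≤ a) (ha2 : a < 1 + 1 / ε) :
    ∃ (V : Type) (_ : Fintype V) (G : SimpleGraph V) (c : Sym2 V → ℝ) (r : V),
      G.Connected ∧
      (∀ e ∈ G.edgeSet, 0 < c e) ∧
      (∀ v : V, wdist G c r v ≤ 1) ∧
      ∀ F : SimpleGraph V, F ≤ G → F.IsTree →
        (∀ (v : V) (p : F.Walk r v), p.IsPath → walkWeight c p ≤ 1 + ε) →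
        a * mstWeight G c < totalWeight F c := by
  classical
  have ha0 : (0:ℝ) < a := lt_of_lt_of_le one_pos ha1
  obtain ⟨g, hgdef⟩ : ∃ g : ℝ, g = 1 + ε - a * ε := ⟨_, rfl⟩
  have hg : 0 < g := by
    have : a * ε < (1 + 1/ε) * ε := by
      exact mul_lt_mul_of_pos_right ha2 hε
    rw [add_mul, one_mul, div_mul_cancel₀ _ (ne_of_gt hε)] at this
    rw [hgdef]; linarith
  obtain ⟨K, hK1, hKε, hK4⟩ : ∃ K : ℕ, 1 ≤ K ∧ ε ≤ (K:ℝ) ∧ 4 * a * ε / g ≤ (K:ℝ) := by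
    refine ⟨⌈4 * a * ε / g⌉₊ + ⌈ε⌉₊ + 1, by omega, ?_, ?_⟩
    · have h1 := Nat.le_ceil ε
      have h2 : (0:ℝ) ≤ (⌈4 * a * ε / g⌉₊ : ℝ) := Nat.cast_nonneg _
      push_cast
      linarith
    · have h1 := Nat.le_ceil (4 * a * ε / g)
      have h2 : (0:ℝ) ≤ (⌈ε⌉₊ : ℝ) := Nat.cast_nonneg _
      push_cast
      linarith
  obtain ⟨m, hm1, hm2⟩ : ∃ m : ℕ, 1 ≤ m ∧ 2 * a / g < (m:ℝ) := by
    refine ⟨⌈2 * a / g⌉₊ + 1, by omega, ?_⟩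
    have h1 := Nat.le_ceil (2 * a / g)
    push_cast
    linarith
  have hk0 : (0:ℝ) < (K:ℝ) := by exact_mod_cast hK1
  obtain ⟨δ, hδdef⟩ : ∃ δ : ℝ, δ = ε / K := ⟨_, rfl⟩
  have hδ : 0 < δ := hδdef ▸ div_pos hε hk0
  have hδ1 : δ ≤ 1 := by
    rw [hδdef, div_le_one hk0]; exact hKε
  have hδk : δ * K = ε := by
    rw [hδdef]; exact div_mul_cancel₀ _ (ne_of_gt hk0)
  refine ⟨SLT.Vx m K, inferInstance, SLT.GG m K, SLT.cw m K δ, none,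
    SLT.GG_connected m K, fun e _ => SLT.cw_pos hδ e, ?_, ?_⟩
  · -- wdist ≤ 1
    intro v
    have hbdd : BddBelow {x : ℝ | ∃ p : (SLT.GG m K).Walk none v, x = walkWeight (SLT.cw m K δ) p} := by
      refine ⟨0, fun x hx => ?_⟩
      obtain ⟨p, rfl⟩ := hx
      exact SLT.walkWeight_nonneg _ (SLT.cw_nonneg hδ) p
    by_cases hv : v = none
    · subst hv
      have h0 : (0:ℝ) ∈ {x : ℝ | ∃ p : (SLT.GG m K).Walk none none, x = walkWeight (SLT.cw m K δ) p} := by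
        refine ⟨SimpleGraph.Walk.nil, ?_⟩
        simp [walkWeight]
      exact le_trans (csInf_le hbdd h0) (by norm_num)
    · have h1 : (1:ℝ) ∈ {x : ℝ | ∃ p : (SLT.GG m K).Walk none v, x = walkWeight (SLT.cw m K δ) p} := by
        refine ⟨SimpleGraph.Walk.cons (SLT.GG_adj_root v hv) SimpleGraph.Walk.nil, ?_⟩
        rw [SLT.walkWeight_cons, SLT.cw_root]
        simp [walkWeight]
      exact csInf_le hbdd h1
  · -- main inequality
    intro F hFG hFtree hlight
    -- mst upper bound
    have htw0 : ∀ (T' : SimpleGraph (SLT.Vx m K)), 0 ≤ totalWeight T' (SLT.cw m K δ) := by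
      intro T'
      have hfin : T'.edgeSet.Finite := Set.toFinite _
      rw [SLT.tw_eq T' _ hfin]
      exact Finset.sum_nonneg (fun e _ => SLT.cw_nonneg hδ e)
    have hmle : mstWeight (SLT.GG m K) (SLT.cw m K δ) ≤ 1 + (m * (K + 2) : ℕ) * δ := by
      rw [mstWeight]
      refine csInf_le ⟨0, fun x hx => ?_⟩ ?_
      · obtain ⟨T', -, -, rfl⟩ := hx
        exact htw0 T'
      · exact ⟨SLT.T0 m K, SLT.T0_le m K, SLT.T0_isTree m K, (SLT.totalWeight_T0 m K δ).symm⟩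
    -- unique paths to the root
    have EU : ∀ v : SLT.Vx m K, ∃ p : F.Walk v none, p.IsPath ∧ ∀ q : F.Walk v none, q.IsPath → q = p := by
      intro v
      obtain ⟨p, hp, hu⟩ := hFtree.existsUnique_path v none
      exact ⟨p, hp, hu⟩
    choose P hP hPu using EU
    set D : SLT.Vx m K → ℝ := fun v => walkWeight (SLT.cw m K δ) (P v) with hDdef
    have hDshallow : ∀ v, D v ≤ 1 + ε := by
      intro v
      have := hlight v (P v).reverse ((hP v).reverse)
      rwa [SLT.walkWeight_reverse] at this
    have hD1 : ∀ v, v ≠ none → 1 ≤ D v := by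
      intro v hv
      have h1 : walkWeight (SLT.cw m K δ) (P v).reverse = D v := SLT.walkWeight_reverse _ _
      obtain ⟨x, hadj, q, heq⟩ := SimpleGraph.Walk.exists_eq_cons_of_ne (Ne.symm hv) (P v).reverse
      rw [heq, SLT.walkWeight_cons, SLT.cw_root] at h1
      have := SLT.walkWeight_nonneg (SLT.cw m K δ) (SLT.cw_nonneg hδ) q
      linarith
    have master : ∀ v, v ≠ none → ∃ w, F.Adj v w ∧ D v = SLT.cw m K δ s(v, w) + D w := by
      intro v hv
      obtain ⟨w, hadj, q, heq⟩ := SimpleGraph.Walk.exists_eq_cons_of_ne hv (P v)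
      have hq : q.IsPath := by
        have := hP v
        rw [heq, SimpleGraph.Walk.cons_isPath_iff] at this
        exact this.1
      refine ⟨w, hadj, ?_⟩
      show walkWeight (SLT.cw m K δ) (P v) = _
      rw [heq, SLT.walkWeight_cons, hPu w q hq]
    have hparx : ∃ par : SLT.Vx m K → SLT.Vx m K, ∀ v, v ≠ none →
        F.Adj v (par v) ∧ D v = SLT.cw m K δ s(v, par v) + D (par v) := by
      choose f hf using master
      refine ⟨fun v => if h : v = none then none else f v h, fun v h => ?_⟩
      simp only [dif_neg h]
      exact hf v h
    obtain ⟨par, hpar⟩ := hparx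
    have hDlt : ∀ v, v ≠ none → D (par v) < D v := by
      intro v h
      have h2 := (hpar v h).2
      have hc := SLT.cw_pos hδ (s(v, par v))
      linarith
    have hmutual : ∀ v w, v ≠ none → w ≠ none → par v = w → par w = v → False := by
      intro v w hv hw h1 h2
      have l1 := hDlt v hv
      have l2 := hDlt w hw
      rw [h1] at l1
      rw [h2] at l2
      linarith
    have htune : ∀ (t : Fin m) (i : Fin (K+2)), SLT.tu t i ≠ (none : SLT.Vx m K) := by
      intro t i
      simp [SLT.tu]
    -- classification of parents of tooth vertices
    have pclass : ∀ (t : Fin m) (i : Fin (K+2)), par (SLT.tu t i) = none ∨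
        (par (SLT.tu t i) = SLT.hub ∧ (i:ℕ) = 0) ∨
        ∃ j : Fin (K+2), par (SLT.tu t i) = SLT.tu t j ∧ ((i:ℕ) + 1 = j ∨ (j:ℕ) + 1 = i) := by
      intro t i
      have hadj : (SLT.GG m K).Adj (SLT.tu t i) (par (SLT.tu t i)) := hFG (hpar _ (htune t i)).1
      obtain ⟨hne', hcase⟩ : _ ∧ _ := hadj
      rcases hcase with h0 | h0 | ⟨x, b, hx, hb, hbb⟩
      · exact absurd h0 (htune t i)
      · exact Or.inl h0
      · have hx' : x = Sum.inl (t, i) := by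
          rw [SLT.tu] at hx
          exact (Option.some_injective _ hx).symm
        subst hx'
        match b, hbb with
        | Sum.inl q, hbb =>
          obtain ⟨q1, q2⟩ := q
          have ht : t = q1 := hbb.1
          subst ht
          exact Or.inr (Or.inr ⟨q2, by rw [hb]; rfl, hbb.2⟩)
        | Sum.inr b, hbb =>
          exact Or.inr (Or.inl ⟨by rw [hb]; rfl, hbb⟩)
    -- each tooth contains a spoke
    have key : ∀ t : Fin m, ∃ i : Fin (K+2), par (SLT.tu t i) = none := by
      intro t
      by_contra hcon
      push_neg at hcon
      have noUp : ∀ (k n : ℕ) (hn1 : n + 1 < K + 2), n + 2 + k = K + 2 →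
          par (SLT.tu t ⟨n, by omega⟩) ≠ SLT.tu t ⟨n + 1, hn1⟩ := by
        intro k
        induction k with
        | zero =>
          intro n hn1 hk heq
          rcases pclass t ⟨n + 1, hn1⟩ with h0 | ⟨-, h2⟩ | ⟨j, hj, hd⟩
          · exact hcon _ h0
          · simp at h2
          · have hjv : (j:ℕ) < K + 2 := j.2
            rcases hd with hd | hd
            · simp only at hd; omega
            · have : j = ⟨n, by omega⟩ := Fin.ext (by simp only at hd ⊢; omega)
              rw [this] at hj
              exact hmutual _ _ (htune t _) (htune t _) heq hj
        | succ k ih =>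
          intro n hn1 hk heq
          rcases pclass t ⟨n + 1, hn1⟩ with h0 | ⟨-, h2⟩ | ⟨j, hj, hd⟩
          · exact hcon _ h0
          · simp at h2
          · rcases hd with hd | hd
            · have hn2 : n + 1 + 1 < K + 2 := by simp only at hd; omega
              have : j = ⟨n + 1 + 1, hn2⟩ := Fin.ext (by simp only at hd ⊢; omega)
              rw [this] at hj
              exact ih (n + 1) hn2 (by omega) hj
            · have : j = ⟨n, by omega⟩ := Fin.ext (by simp only at hd ⊢; omega)
              rw [this] at hj
              exact hmutual _ _ (htune t _) (htune t _) heq hj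
      have pdown : ∀ (n : ℕ) (h : n + 1 < K + 2),
          par (SLT.tu t ⟨n + 1, h⟩) = SLT.tu t ⟨n, by omega⟩ := by
        intro n h
        rcases pclass t ⟨n + 1, h⟩ with h0 | ⟨-, h2⟩ | ⟨j, hj, hd⟩
        · exact absurd h0 (hcon _)
        · simp at h2
        · rcases hd with hd | hd
          · have hn2 : n + 1 + 1 < K + 2 := by
              have := j.2; simp only at hd; omega
            have : j = ⟨n + 1 + 1, hn2⟩ := Fin.ext (by simp only at hd ⊢; omega)
            rw [this] at hj
            exact absurd hj (noUp (K + 2 - (n + 1) - 2) (n + 1) hn2 (by omega))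
          · have : j = ⟨n, by omega⟩ := Fin.ext (by simp only at hd ⊢; omega)
            rw [this] at hj
            exact hj
      have Dchain : ∀ (n : ℕ) (h : n < K + 2), 1 + n * δ ≤ D (SLT.tu t ⟨n, h⟩) := by
        intro n
        induction n with
        | zero =>
          intro h
          simpa using hD1 _ (htune t _)
        | succ n ih =>
          intro h
          have hn : n < K + 2 := by omega
          have hpe := pdown n h
          have heq := (hpar (SLT.tu t ⟨n + 1, h⟩) (htune t _)).2
          rw [hpe] at heq
          have hcw : SLT.cw m K δ s(SLT.tu t ⟨n + 1, h⟩, SLT.tu t ⟨n, by omega⟩) = δ :=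
            SLT.cw_nonroot _ _
          rw [hcw] at heq
          have := ih hn
          push_cast
          push_cast at this
          linarith
      have h1 := Dchain (K + 1) (by omega)
      have h2 := hDshallow (SLT.tu t ⟨K + 1, by omega⟩)
      have h3 : ε < ((K:ℝ) + 1) * δ := by
        have : ((K:ℝ) + 1) * δ = δ * K + δ := by ring
        rw [this, hδk]
        linarith
      push_cast at h1
      linarith
    -- lower bound the weight of F
    have hfinF : F.edgeSet.Finite := Set.toFinite _
    have htwF : totalWeight F (SLT.cw m K δ) = ∑ e ∈ hfinF.toFinset, SLT.cw m K δ e :=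
      SLT.tw_eq F _ hfinF
    set pe : Fin m × Fin (K + 2) → Sym2 (SLT.Vx m K) :=
      fun p => s(SLT.tu p.1 p.2, par (SLT.tu p.1 p.2)) with hpedef
    have hpeF : ∀ p, pe p ∈ hfinF.toFinset := by
      intro p
      rw [Set.Finite.mem_toFinset]
      exact (hpar _ (htune p.1 p.2)).1
    have hpeInj : ∀ p ∈ (Finset.univ : Finset (Fin m × Fin (K+2))), ∀ q ∈ Finset.univ,
        pe p = pe q → p = q := by
      intro p _ q _ h
      simp only [hpedef, Sym2.eq, Sym2.rel_iff', Prod.mk.injEq, Prod.swap_prod_mk] at h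
      rcases h with ⟨h1, -⟩ | ⟨h1, h2⟩
      · rw [SLT.tu, SLT.tu] at h1
        simp only [Option.some.injEq, Sum.inl.injEq, Prod.mk.injEq] at h1
        exact Prod.ext h1.1 h1.2
      · exfalso
        have l1 := hDlt _ (htune p.1 p.2)
        have l2 := hDlt _ (htune q.1 q.2)
        rw [h2] at l1
        rw [← h1] at l2
        linarith
    have hsub : Finset.image pe Finset.univ ⊆ hfinF.toFinset := by
      intro e he
      obtain ⟨p, -, rfl⟩ := Finset.mem_image.1 he
      exact hpeF p
    have hFlow : (m:ℝ) * (1 + (K + 1 : ℕ) * δ) ≤ totalWeight F (SLT.cw m K δ) := by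
      rw [htwF]
      have step1 : ∑ e ∈ Finset.image pe Finset.univ, SLT.cw m K δ e ≤
          ∑ e ∈ hfinF.toFinset, SLT.cw m K δ e :=
        Finset.sum_le_sum_of_subset_of_nonneg hsub (fun e _ _ => SLT.cw_nonneg hδ e)
      have step2 : ∑ e ∈ Finset.image pe Finset.univ, SLT.cw m K δ e =
          ∑ p : Fin m × Fin (K+2), SLT.cw m K δ (pe p) := Finset.sum_image hpeInj
      have step3 : ∀ t : Fin m, (1 + (K + 1 : ℕ) * δ) ≤
          ∑ i : Fin (K+2), SLT.cw m K δ (pe (t, i)) := by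
        intro t
        obtain ⟨i0, hi0⟩ := key t
        have hterm0 : SLT.cw m K δ (pe (t, i0)) = 1 := by
          simp only [hpedef]
          rw [hi0, Sym2.eq_swap, SLT.cw_root]
        have : ∑ i : Fin (K+2), SLT.cw m K δ (pe (t, i)) =
            SLT.cw m K δ (pe (t, i0)) + ∑ i ∈ Finset.univ.erase i0, SLT.cw m K δ (pe (t, i)) :=
          (Finset.add_sum_erase _ _ (Finset.mem_univ i0)).symm
        rw [this, hterm0]
        have hrest : ((K + 1 : ℕ) : ℝ) * δ ≤ ∑ i ∈ Finset.univ.erase i0, SLT.cw m K δ (pe (t, i)) := by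
          calc ((K + 1 : ℕ) : ℝ) * δ = (Finset.univ.erase i0).card • δ := by
                rw [Finset.card_erase_of_mem (Finset.mem_univ i0)]
                simp [nsmul_eq_mul]
          _ = ∑ _i ∈ Finset.univ.erase i0, δ := by rw [Finset.sum_const]
          _ ≤ _ := Finset.sum_le_sum (fun i _ => SLT.cw_ge hδ1 _)
        linarith
      have step4 : (m:ℝ) * (1 + (K + 1 : ℕ) * δ) ≤
          ∑ p : Fin m × Fin (K+2), SLT.cw m K δ (pe p) := by
        rw [Fintype.sum_prod_type]
        calc (m:ℝ) * (1 + (K + 1 : ℕ) * δ) = ∑ _t : Fin m, (1 + (K + 1 : ℕ) * δ) := by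
              rw [Finset.sum_const, Finset.card_univ, Fintype.card_fin, nsmul_eq_mul]
        _ ≤ _ := Finset.sum_le_sum (fun t _ => step3 t)
      linarith
    -- final arithmetic
    have harith : a * (1 + (m * (K + 2) : ℕ) * δ) < (m:ℝ) * (1 + (K + 1 : ℕ) * δ) := by
      have hM1 : (1:ℝ) ≤ (m:ℝ) := by exact_mod_cast hm1
      have h1 : 4 * a * ε ≤ (K:ℝ) * g := by
        rw [div_le_iff₀ hg] at hK4
        linarith
      have h2 : 2 * a < (m:ℝ) * g := by
        rw [div_lt_iff₀ hg] at hm2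
        linarith
      have hprod1 : 2 * a * ε * (m:ℝ) ≤ (K:ℝ) * g * (m:ℝ) / 2 := by
        nlinarith [mul_le_mul_of_nonneg_right h1 (show (0:ℝ) ≤ (m:ℝ) / 2 by positivity)]
      have hprod2 : a * (K:ℝ) < (m:ℝ) * g * (K:ℝ) / 2 := by
        have h3 := mul_lt_mul_of_pos_right h2 hk0
        nlinarith [h3]
      have key2 : a * (K:ℝ) + a * (m:ℝ) * ((K:ℝ) + 2) * ε <
          (m:ℝ) * (K:ℝ) + (m:ℝ) * ((K:ℝ) + 1) * ε := by
        have hMε : 0 < (m:ℝ) * ε := by positivity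
        have e1 : (m:ℝ) * (K:ℝ) * g = (m:ℝ) * (K:ℝ) + (m:ℝ) * (K:ℝ) * ε - a * ((m:ℝ) * (K:ℝ) * ε) := by
          rw [hgdef]; ring
        nlinarith [e1, hprod1, hprod2, hMε]
      have expand : a * (1 + (m * (K + 2) : ℕ) * δ) * (K:ℝ) =
          a * (K:ℝ) + a * (m:ℝ) * ((K:ℝ) + 2) * (δ * (K:ℝ)) := by
        push_cast
        ring
      have expand2 : (m:ℝ) * (1 + (K + 1 : ℕ) * δ) * (K:ℝ) =
          (m:ℝ) * (K:ℝ) + (m:ℝ) * ((K:ℝ) + 1) * (δ * (K:ℝ)) := by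
        push_cast
        ring
      have hlt : a * (1 + (m * (K + 2) : ℕ) * δ) * (K:ℝ) <
          (m:ℝ) * (1 + (K + 1 : ℕ) * δ) * (K:ℝ) := by
        rw [expand, expand2, hδk]
        exact key2
      exact lt_of_mul_lt_mul_right hlt (le_of_lt hk0)
    calc a * mstWeight (SLT.GG m K) (SLT.cw m K δ) ≤ a * (1 + (m * (K + 2) : ℕ) * δ) :=
          mul_le_mul_of_nonneg_left hmle (le_of_lt ha0)
    _ < (m:ℝ) * (1 + (K + 1 : ℕ) * δ) := harith
    _ ≤ totalWeight F (SLT.cw m K δ) := hFlow
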